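/- Let r, s, u ∈ ℂ with r ≠ 2 and r ≠ −2. Then there exist symmetric matrices B, C ∈ Mat₄(ℂ) (i.e. Bᵀ = B and Cᵀ = C) such that, regarding x·I + y·B + z·C as a 4×4 matrix over the polynomial ring ℂ[x,y,z] (I the identity matrix), one has det(x·I + y·B + z·C) = x⁴ + y⁴ + z⁴ + r·x²y² + s·y²z² + u·z²x². Moreover B can be taken diagonal and C can be taken with zero diagonal. -/

import Mathlib

open MvPolynomial

lemma quad_root (A B C : ℂ) (hA : A ≠ 0) : ∃ P : ℂ, A * P ^ 2 + B * P + C = 0 := by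
  obtain ⟨e, he⟩ := IsAlgClosed.exists_pow_nat_eq (B ^ 2 - 4 * A * C) (n := 2) (by norm_num)
  refine ⟨(-B + e) / (2 * A), ?_⟩
  field_simp
  ring_nf
  linear_combination he

set_option maxHeartbeats 1000000 in
lemma my_det_fin_four {R : Type*} [CommRing R] (A : Matrix (Fin 4) (Fin 4) R) :
    A.det =
      A 0 0 * (A 1 1 * (A 2 2 * A 3 3 - A 2 3 * A 3 2) - A 1 2 * (A 2 1 * A 3 3 - A 2 3 * A 3 1)
        + A 1 3 * (A 2 1 * A 3 2 - A 2 2 * A 3 1))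
      - A 0 1 * (A 1 0 * (A 2 2 * A 3 3 - A 2 3 * A 3 2) - A 1 2 * (A 2 0 * A 3 3 - A 2 3 * A 3 0)
        + A 1 3 * (A 2 0 * A 3 2 - A 2 2 * A 3 0))
      + A 0 2 * (A 1 0 * (A 2 1 * A 3 3 - A 2 3 * A 3 1) - A 1 1 * (A 2 0 * A 3 3 - A 2 3 * A 3 0)
        + A 1 3 * (A 2 0 * A 3 1 - A 2 1 * A 3 0))
      - A 0 3 * (A 1 0 * (A 2 1 * A 3 2 - A 2 2 * A 3 1) - A 1 1 * (A 2 0 * A 3 2 - A 2 2 * A 3 0)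
        + A 1 2 * (A 2 0 * A 3 1 - A 2 1 * A 3 0)) := by
  rw [Matrix.det_succ_row_zero]
  simp [Fin.sum_univ_succ, Matrix.det_fin_three, Matrix.submatrix_apply,
    show (Fin.succ 2 : Fin 4) = 3 from rfl, show (Fin.castSucc 2 : Fin 4) = 2 from rfl,
    show (Fin.succAbove (2 : Fin 4) 2) = 3 from rfl, show (Fin.succAbove (1 : Fin 4) 2) = 3 from rfl, show (Fin.succAbove (3 : Fin 4) 2) = 2 from rfl]
  ring

set_option maxHeartbeats 2000000 in
/-- For `r, s, u ∈ ℂ` with `r ≠ 2` and `r ≠ −2`, there exist symmetric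
matrices `B, C ∈ Mat₄(ℂ)`, with `B` diagonal and `C` of zero diagonal, such that
`det(x·I + y·B + z·C) = x⁴ + y⁴ + z⁴ + r·x²y² + s·y²z² + u·z²x²` in `ℂ[x,y,z]`. -/
theorem stmt_15 (r s u : ℂ) (hr2 : r ≠ 2) (hr2' : r ≠ -2) :
    ∃ B M : Matrix (Fin 4) (Fin 4) ℂ,
      B.transpose = B ∧ M.transpose = M ∧
      (∀ i j : Fin 4, i ≠ j → B i j = 0) ∧
      (∀ i : Fin 4, M i i = 0) ∧
      Matrix.det
        ((X 0 : MvPolynomial (Fin 3) ℂ) • (1 : Matrix (Fin 4) (Fin 4) (MvPolynomial (Fin 3) ℂ)) +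
          (X 1 : MvPolynomial (Fin 3) ℂ) • B.map MvPolynomial.C +
          (X 2 : MvPolynomial (Fin 3) ℂ) • M.map MvPolynomial.C) =
        (X 0) ^ 4 + (X 1) ^ 4 + (X 2) ^ 4 + MvPolynomial.C r * (X 0) ^ 2 * (X 1) ^ 2 +
          MvPolynomial.C s * (X 1) ^ 2 * (X 2) ^ 2 +
          MvPolynomial.C u * (X 2) ^ 2 * (X 0) ^ 2 := by
  -- a with (a^2)^2 + r a^2 + 1 = 0, b := a⁻¹
  obtain ⟨d, hd⟩ := IsAlgClosed.exists_pow_nat_eq (r ^ 2 - 4) (n := 2) (by norm_num)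
  obtain ⟨a, ha⟩ := IsAlgClosed.exists_pow_nat_eq ((-r + d) / 2) (n := 2) (by norm_num)
  have hquad : a ^ 2 * a ^ 2 + r * a ^ 2 + 1 = 0 := by
    rw [ha]; field_simp; ring_nf; linear_combination hd
  have ha0 : a ≠ 0 := by intro h; rw [h] at hquad; norm_num at hquad
  set b : ℂ := a⁻¹ with hb
  have hab : a * b = 1 := mul_inv_cancel₀ ha0
  have h2 : a ^ 2 * b ^ 2 = 1 := by
    rw [hb, inv_pow, mul_inv_cancel₀ (pow_ne_zero 2 ha0)]
  have h1 : a ^ 2 + b ^ 2 = -r :=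
    mul_left_cancel₀ (pow_ne_zero 2 ha0)
      (show a ^ 2 * (a ^ 2 + b ^ 2) = a ^ 2 * (-r) by linear_combination hquad + h2)
  -- a^2 ≠ b^2
  have hr2pos : r + 2 ≠ 0 := fun h => hr2' (eq_neg_of_add_eq_zero_left h)
  have hne : a ^ 2 - b ^ 2 ≠ 0 := by
    intro h
    have h4 : (r - 2) * (r + 2) = 0 := by
      linear_combination (r - (a ^ 2 + b ^ 2)) * h1 + 4 * h2 + (a ^ 2 - b ^ 2) * h
    rcases mul_eq_zero.mp h4 with h' | h'
    · exact hr2 (sub_eq_zero.mp h')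
    · exact hr2pos h'
  -- quadratic for P
  have hA0 : (a ^ 2 - b ^ 2) ^ 2 + 4 * (a ^ 2 - 1) * (b ^ 2 - 1) = (r + 2) ^ 2 := by
    linear_combination (a ^ 2 + b ^ 2 - r - 4) * h1
  obtain ⟨P, hP⟩ := quad_root ((a ^ 2 - b ^ 2) ^ 2 + 4 * (a ^ 2 - 1) * (b ^ 2 - 1))
    (-2 * (a ^ 2 - b ^ 2) ^ 2 + 2 * (a ^ 2 - 1) * (s + b ^ 2 * u) + 2 * (b ^ 2 - 1) * (s + a ^ 2 * u))
    ((a ^ 2 - b ^ 2) ^ 2 + (s + a ^ 2 * u) * (s + b ^ 2 * u))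
    (by rw [hA0]; exact pow_ne_zero 2 hr2pos)
  set Mv : ℂ := -(s + a ^ 2 * u + 2 * (a ^ 2 - 1) * P) / (a ^ 2 - b ^ 2) with hMv
  set Nv : ℂ := (s + b ^ 2 * u + 2 * (b ^ 2 - 1) * P) / (a ^ 2 - b ^ 2) with hNv
  have g1 : Mv + Nv + 2 * P = -u := by
    rw [hMv, hNv]; field_simp; ring
  have g2 : b ^ 2 * Mv + a ^ 2 * Nv + 2 * P = s := by
    rw [hMv, hNv]; field_simp; ring
  have g3 : Mv * Nv = (P - 1) ^ 2 := by
    rw [hMv, hNv, div_mul_div_comm, div_eq_iff (mul_ne_zero hne hne)]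
    linear_combination -hP
  -- square roots
  obtain ⟨m, hm⟩ := IsAlgClosed.exists_pow_nat_eq Mv (n := 2) (by norm_num)
  obtain ⟨p, hp⟩ := IsAlgClosed.exists_pow_nat_eq P (n := 2) (by norm_num)
  obtain ⟨n0, hn0⟩ := IsAlgClosed.exists_pow_nat_eq Nv (n := 2) (by norm_num)
  have hmn2 : (m * n0 - (P - 1)) * (m * n0 + (P - 1)) = 0 := by
    linear_combination n0 ^ 2 * hm + Mv * hn0 + g3
  obtain ⟨n, hn, hmn⟩ : ∃ n : ℂ, n ^ 2 = Nv ∧ m * n = P - 1 := by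
    rcases mul_eq_zero.mp hmn2 with h | h
    · exact ⟨n0, hn0, by linear_combination h⟩
    · exact ⟨-n0, by rw [neg_pow]; simpa using hn0, by linear_combination -h⟩
  -- the coefficient identities
  have H3 : m ^ 2 + n ^ 2 + 2 * p ^ 2 = -u := by
    linear_combination hm + hn + 2 * hp + g1
  have H4 : b ^ 2 * m ^ 2 + a ^ 2 * n ^ 2 + 2 * (a * b) * p ^ 2 = s := by
    linear_combination b ^ 2 * hm + a ^ 2 * hn + 2 * p ^ 2 * hab + 2 * hp + g2
  have H5 : p ^ 2 - m * n = 1 := by linear_combination hp - hmn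
  clear hmn2 hn0 hd ha hquad hP hMv hNv g1 g2 g3 hm hn hp hmn hA0
  -- the matrices
  refine ⟨!![a, 0, 0, 0; 0, -a, 0, 0; 0, 0, b, 0; 0, 0, 0, -b],
    !![0, m, 0, p; m, 0, p, 0; 0, p, 0, n; p, 0, n, 0], ?_, ?_, ?_, ?_, ?_⟩
  · ext i j
    fin_cases i <;> fin_cases j <;> rfl
  · ext i j
    fin_cases i <;> fin_cases j <;> rfl
  · intro i j hij
    fin_cases i <;> fin_cases j <;> first | rfl | exact absurd rfl hij
  · intro i; fin_cases i <;> rfl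
  -- the determinant identity
  have hmat : ((X 0 : MvPolynomial (Fin 3) ℂ) • (1 : Matrix (Fin 4) (Fin 4) (MvPolynomial (Fin 3) ℂ)) +
      (X 1 : MvPolynomial (Fin 3) ℂ) • (!![a, 0, 0, 0; 0, -a, 0, 0; 0, 0, b, 0; 0, 0, 0, -b]).map MvPolynomial.C +
      (X 2 : MvPolynomial (Fin 3) ℂ) • (!![0, m, 0, p; m, 0, p, 0; 0, p, 0, n; p, 0, n, 0]).map MvPolynomial.C) =
      !![X 0 + X 1 * C a, X 2 * C m, 0, X 2 * C p;
         X 2 * C m, X 0 - X 1 * C a, X 2 * C p, 0;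
         0, X 2 * C p, X 0 + X 1 * C b, X 2 * C n;
         X 2 * C p, 0, X 2 * C n, X 0 - X 1 * C b] := by
    refine Matrix.ext fun i j => ?_
    fin_cases i <;> fin_cases j <;>
      simp [Matrix.one_apply, Matrix.vecHead, Matrix.vecTail] <;> ring
  rw [hmat, my_det_fin_four]
  have H1' : (C a : MvPolynomial (Fin 3) ℂ) ^ 2 + (C b) ^ 2 = -(C r) := by
    rw [← map_pow, ← map_pow, ← map_add, h1, map_neg]
  have H2' : (C a : MvPolynomial (Fin 3) ℂ) ^ 2 * (C b) ^ 2 = 1 := by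
    rw [← map_pow, ← map_pow, ← map_mul, h2, map_one]
  have H3' : (C m : MvPolynomial (Fin 3) ℂ) ^ 2 + (C n) ^ 2 + 2 * (C p) ^ 2 = -(C u) := by
    have := congrArg (C : ℂ →+* MvPolynomial (Fin 3) ℂ) H3
    push_cast at this
    simpa [show (C 2 : MvPolynomial (Fin 3) ℂ) = 2 from map_ofNat C 2] using this
  have H4' : (C b : MvPolynomial (Fin 3) ℂ) ^ 2 * (C m) ^ 2 + (C a) ^ 2 * (C n) ^ 2 +
      2 * (C a * C b) * (C p) ^ 2 = C s := by
    have := congrArg (C : ℂ →+* MvPolynomial (Fin 3) ℂ) H4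
    push_cast at this
    simpa [show (C 2 : MvPolynomial (Fin 3) ℂ) = 2 from map_ofNat C 2] using this
  have H5' : (C p : MvPolynomial (Fin 3) ℂ) ^ 2 - C m * C n = 1 := by
    have := congrArg (C : ℂ →+* MvPolynomial (Fin 3) ℂ) H5
    push_cast at this
    simpa [show (C 2 : MvPolynomial (Fin 3) ℂ) = 2 from map_ofNat C 2] using this
  simp [Matrix.vecHead, Matrix.vecTail]
  linear_combination (X 1 : MvPolynomial (Fin 3) ℂ) ^ 4 * H2' - (X 0) ^ 2 * (X 1) ^ 2 * H1' -
    (X 0) ^ 2 * (X 2) ^ 2 * H3' + (X 1) ^ 2 * (X 2) ^ 2 * H4' +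
    (X 2) ^ 4 * ((C p) ^ 2 - C m * C n + 1) * H5'
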